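/- Let ρ ≥ √2 + 1 be real. (a) For every real α ≥ 0 and every β ∈ ℂ with |α + β| ≤ 1 and |α − β| ≤ 1, one has D(ρ + α, β) := min{ 2|β|, √2·|(ρ+α) − β|, √2·|(ρ+α) + β|, √2·|(ρ+α) − iβ|, √2·|(ρ+α) + iβ|, 2(ρ+α) } ≤ 2. (b) For α = 0 and β = e^{iθ} with any θ ∈ [−π, 0], D(ρ, e^{iθ}) = 2. Consequently 2 is the greatest element of { D(ρ + α, β) : α ≥ 0, |α + β| ≤ 1, |α − β| ≤ 1 }. -/

import Mathlib

open Real Complex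

/-- The minimum pairwise Euclidean distance of the 8-point composite constellation. -/
noncomputable def Dmin (ξ : ℝ) (β : ℂ) : ℝ :=
  min (min (min (2 * ‖β‖) (Real.sqrt 2 * ‖((ξ : ℝ) - β)‖))
        (min (Real.sqrt 2 * ‖((ξ : ℝ) + β)‖)
          (Real.sqrt 2 * ‖((ξ : ℝ) - Complex.I * β)‖)))
      (min (Real.sqrt 2 * ‖((ξ : ℝ) + Complex.I * β)‖) (2 * ξ))

lemma beta_le_one (α : ℝ) (β : ℂ) (h1 : ‖((α : ℝ) + β)‖ ≤ 1)
    (h2 : ‖((α : ℝ) - β)‖ ≤ 1) : ‖β‖ ≤ 1 := by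
  have key : (2 : ℂ) * β = ((α : ℂ) + β) - ((α : ℂ) - β) := by ring
  have h3 : ‖((2 : ℂ) * β)‖ ≤ 2 := by
    rw [key, sub_eq_add_neg]
    calc ‖(((α : ℂ) + β) + -((α : ℂ) - β))‖
        ≤ ‖((α : ℂ) + β)‖ + ‖(-((α : ℂ) - β))‖ := norm_add_le _ _
      _ = ‖((α : ℂ) + β)‖ + ‖((α : ℂ) - β)‖ := by rw [norm_neg]
      _ ≤ 2 := by linarith
  rw [norm_mul] at h3
  simp only [Complex.norm_two] at h3
  linarith

lemma lower_aux (ρ : ℝ) (hρ : Real.sqrt 2 + 1 ≤ ρ) (c : ℂ) (hc : ‖c‖ = 1) :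
    2 ≤ Real.sqrt 2 * ‖((ρ : ℂ) + c)‖ := by
  have hs2 : (0:ℝ) < Real.sqrt 2 := Real.sqrt_pos.mpr (by norm_num)
  have hρ0 : (0:ℝ) ≤ ρ := by linarith
  have htri : ‖(ρ : ℂ)‖ ≤ ‖((ρ : ℂ) + c)‖ + ‖c‖ := by
    calc ‖(ρ : ℂ)‖ = ‖(((ρ : ℂ) + c) + (-c))‖ := by ring_nf
      _ ≤ ‖((ρ : ℂ) + c)‖ + ‖(-c)‖ := norm_add_le _ _
      _ = ‖((ρ : ℂ) + c)‖ + ‖c‖ := by rw [norm_neg]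
  rw [Complex.norm_real, Real.norm_eq_abs, _root_.abs_of_nonneg hρ0, hc] at htri
  have h1 : Real.sqrt 2 ≤ ‖((ρ : ℂ) + c)‖ := by linarith
  calc (2:ℝ) = Real.sqrt 2 * Real.sqrt 2 := (Real.mul_self_sqrt (by norm_num)).symm
    _ ≤ Real.sqrt 2 * ‖((ρ : ℂ) + c)‖ := by
        exact mul_le_mul_of_nonneg_left h1 hs2.le

lemma Dmin_eq_two (ρ : ℝ) (hρ : Real.sqrt 2 + 1 ≤ ρ) (β : ℂ) (hβ : ‖β‖ = 1) :
    Dmin ρ β = 2 := by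
  have h2 : (2:ℝ) * ‖β‖ = 2 := by rw [hβ]; ring
  have hA : 2 ≤ Real.sqrt 2 * ‖((ρ : ℂ) - β)‖ := by
    have := lower_aux ρ hρ (-β) (by rw [norm_neg, hβ])
    simpa [sub_eq_add_neg] using this
  have hB : 2 ≤ Real.sqrt 2 * ‖((ρ : ℂ) + β)‖ := lower_aux ρ hρ β hβ
  have hC : 2 ≤ Real.sqrt 2 * ‖((ρ : ℂ) - Complex.I * β)‖ := by
    have := lower_aux ρ hρ (-(Complex.I * β)) (by rw [norm_neg, norm_mul, hβ, Complex.norm_I, one_mul])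
    simpa [sub_eq_add_neg] using this
  have hD : 2 ≤ Real.sqrt 2 * ‖((ρ : ℂ) + Complex.I * β)‖ := by
    have := lower_aux ρ hρ (Complex.I * β) (by simp [map_mul, hβ])
    simpa using this
  have hE : (2:ℝ) ≤ 2 * ρ := by
    have : (1:ℝ) ≤ Real.sqrt 2 := by
      rw [show (1:ℝ) = Real.sqrt 1 by simp]
      exact Real.sqrt_le_sqrt (by norm_num)
    linarith
  unfold Dmin
  apply le_antisymm
  · calc _ ≤ 2 * ‖β‖ := (min_le_left _ _).trans ((min_le_left _ _).trans (min_le_left _ _))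
      _ = 2 := h2
  · exact le_min (le_min (le_min h2.ge hA) (le_min hB hC)) (le_min hD hE)

theorem stmt_15 (ρ : ℝ) (hρ : Real.sqrt 2 + 1 ≤ ρ) :
    (∀ α : ℝ, 0 ≤ α → ∀ β : ℂ, ‖((α : ℝ) + β)‖ ≤ 1 →
      ‖((α : ℝ) - β)‖ ≤ 1 → Dmin (ρ + α) β ≤ 2) ∧
    (∀ θ : ℝ, θ ∈ Set.Icc (-π) 0 → Dmin ρ (Complex.exp ((θ : ℂ) * Complex.I)) = 2) ∧
    IsGreatest {d : ℝ | ∃ α : ℝ, ∃ β : ℂ, 0 ≤ α ∧ ‖((α : ℝ) + β)‖ ≤ 1 ∧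
      ‖((α : ℝ) - β)‖ ≤ 1 ∧ d = Dmin (ρ + α) β} 2 := by
  have ha : ∀ α : ℝ, 0 ≤ α → ∀ β : ℂ, ‖((α : ℝ) + β)‖ ≤ 1 →
      ‖((α : ℝ) - β)‖ ≤ 1 → Dmin (ρ + α) β ≤ 2 := by
    intro α hα β h1 h2
    have hb := beta_le_one α β h1 h2
    calc Dmin (ρ + α) β ≤ 2 * ‖β‖ := by
          unfold Dmin
          exact (min_le_left _ _).trans ((min_le_left _ _).trans (min_le_left _ _))
      _ ≤ 2 := by linarith
  refine ⟨ha, ?_, ?_⟩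
  · intro θ _
    apply Dmin_eq_two ρ hρ
    rw [Complex.norm_exp]
    simp [Complex.mul_I_re, Complex.ofReal_re, Complex.ofReal_im]
  · constructor
    · exact ⟨0, 1, le_refl 0, by norm_num, by norm_num, by
        rw [add_zero]; exact (Dmin_eq_two ρ hρ 1 (by simp)).symm⟩
    · rintro d ⟨α, β, hα, h1, h2, rfl⟩
      exact ha α hα β h1 h2
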